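/- Let ρ be a density matrix on ℂ^d and let U and V be d×d unitary matrices, regarded as the unitary channels ρ ↦ UρU† and ρ ↦ VρV†. Then Q_ρ(U)·Q_ρ(V) ≥ (1/4) |tr([U, V†] ρ)|². -/

import Mathlib

open Matrix
open scoped ComplexOrder

noncomputable section

def Matrix.PosSemidef.sqrt {n 𝕜 : Type*} [Fintype n] [DecidableEq n] [RCLike 𝕜]
    {A : Matrix n n 𝕜} (hA : A.PosSemidef) : Matrix n n 𝕜 :=
  hA.1.eigenvectorUnitary.1 * diagonal ((↑) ∘ (√·) ∘ hA.1.eigenvalues) *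
    (star hA.1.eigenvectorUnitary : Matrix n n 𝕜)

lemma psd_sqrt_mul_self {d : ℕ} {ρ : Matrix (Fin d) (Fin d) ℂ} (hρ : ρ.PosSemidef) :
    hρ.sqrt * hρ.sqrt = ρ := by
  have hP : (star hρ.1.eigenvectorUnitary : Matrix (Fin d) (Fin d) ℂ) *
      hρ.1.eigenvectorUnitary.1 = 1 := hρ.1.eigenvectorUnitary.2.1
  have hD : diagonal ((RCLike.ofReal ∘ (√·) ∘ hρ.1.eigenvalues : Fin d → ℂ)) *
      diagonal (RCLike.ofReal ∘ (√·) ∘ hρ.1.eigenvalues) =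
      diagonal (RCLike.ofReal ∘ hρ.1.eigenvalues) := by
    rw [diagonal_mul_diagonal]
    congr 1; funext i
    simp only [Function.comp_apply]
    rw [← RCLike.ofReal_mul, Real.mul_self_sqrt (hρ.eigenvalues_nonneg i)]
  conv_rhs => rw [hρ.1.spectral_theorem, Unitary.conjStarAlgAut_apply]
  rw [Matrix.PosSemidef.sqrt]
  simp only [mul_assoc]
  rw [← mul_assoc (star hρ.1.eigenvectorUnitary : Matrix (Fin d) (Fin d) ℂ), hP, one_mul,
    ← mul_assoc _ (diagonal _) (star _ : Matrix (Fin d) (Fin d) ℂ), hD]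

lemma psd_sqrt_herm {d : ℕ} {ρ : Matrix (Fin d) (Fin d) ℂ} (hρ : ρ.PosSemidef) :
    hρ.sqrt ᴴ = hρ.sqrt := by
  rw [Matrix.PosSemidef.sqrt, conjTranspose_mul, conjTranspose_mul, diagonal_conjTranspose]
  simp only [← star_eq_conjTranspose, star_star, mul_assoc]
  congr 2
  congr 1
  funext i; simp

section helpers

lemma trace_form_eq {d : ℕ} (A B : Matrix (Fin d) (Fin d) ℂ) :
    (Aᴴ * B).trace = ∑ p : Fin d × Fin d, (starRingEnd ℂ) (A p.1 p.2) * B p.1 p.2 := by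
  rw [Fintype.sum_prod_type]
  simp only [Matrix.trace, Matrix.diag, Matrix.mul_apply, Matrix.conjTranspose_apply]
  rw [Finset.sum_comm]
  simp [Complex.star_def]

lemma trace_cs {d : ℕ} (A B : Matrix (Fin d) (Fin d) ℂ) :
    ‖(Aᴴ * B).trace‖ ^ 2 ≤ ((Aᴴ * A).trace).re * ((Bᴴ * B).trace).re := by
  classical
  set emb : Matrix (Fin d) (Fin d) ℂ → EuclideanSpace ℂ (Fin d × Fin d) :=
    fun M => WithLp.toLp 2 (fun p : Fin d × Fin d => M p.1 p.2) with hemb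
  have key : ∀ (M N : Matrix (Fin d) (Fin d) ℂ),
      (Mᴴ * N).trace = inner (𝕜 := ℂ) (emb M) (emb N) := by
    intro M N
    rw [trace_form_eq]; simp [PiLp.inner_apply, RCLike.inner_apply, hemb, mul_comm]
  have hxx : ((Aᴴ * A).trace).re = ‖emb A‖ ^ 2 := by
    rw [key A A, @inner_self_eq_norm_sq_to_K ℂ]; norm_cast
  have hyy : ((Bᴴ * B).trace).re = ‖emb B‖ ^ 2 := by
    rw [key B B, @inner_self_eq_norm_sq_to_K ℂ]; norm_cast
  have h := norm_inner_le_norm (𝕜 := ℂ) (emb A) (emb B)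
  rw [hxx, hyy, key A B]
  calc ‖(inner ℂ (emb A) (emb B) : ℂ)‖ ^ 2 ≤ (‖emb A‖ * ‖emb B‖) ^ 2 := by
        apply pow_le_pow_left₀ (norm_nonneg _) h
    _ = ‖emb A‖ ^ 2 * (‖emb B‖ ^ 2) := by ring

lemma trace_sq_nonneg {d : ℕ} (A : Matrix (Fin d) (Fin d) ℂ) :
    0 ≤ ((Aᴴ * A).trace).re := by
  rw [trace_form_eq, Complex.re_sum]
  apply Finset.sum_nonneg
  intro p _
  have : (starRingEnd ℂ) (A p.1 p.2) * A p.1 p.2 = (Complex.normSq (A p.1 p.2) : ℂ) := by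
    rw [mul_comm, Complex.mul_conj]
  rw [this]
  simp [Complex.normSq_nonneg]

variable {d : ℕ} (r ρ U V W : Matrix (Fin d) (Fin d) ℂ)

lemma keyL1 (hr : r * r = ρ) (hrH : rᴴ = r) (hρH : ρᴴ = ρ) (htrρ : ρ.trace = 1)
    (hW : Wᴴ * W = 1) :
    ((r*W - W*r)ᴴ * (r*W - W*r)).trace
      + ((r*W + W*r - (2*(W*ρ).trace)•r)ᴴ * (r*W + W*r - (2*(W*ρ).trace)•r)).trace
      = 4 - 4*((W*ρ).trace * star ((W*ρ).trace)) := by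
  have hWW : W * Wᴴ = 1 := mul_eq_one_comm.mp hW
  have h1 : (Wᴴ * (r * (r * W))).trace = 1 := by
    rw [← mul_assoc r r W, hr, Matrix.trace_mul_comm, mul_assoc, hWW, mul_one, htrρ]
  have h2 : (r * (Wᴴ * (W * r))).trace = 1 := by
    rw [← mul_assoc Wᴴ W r, hW, one_mul, hr, htrρ]
  have h3 : (r * (r * W)).trace = (W * ρ).trace := by
    rw [← mul_assoc r r W, hr, Matrix.trace_mul_comm]
  have h4 : (r * (W * r)).trace = (W * ρ).trace := by
    rw [Matrix.trace_mul_comm, mul_assoc, hr]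
  have h5 : (Wᴴ * (r * r)).trace = star (W * ρ).trace := by
    rw [hr]
    have : Wᴴ * ρ = (ρ * W)ᴴ := by rw [conjTranspose_mul, hρH]
    rw [this, Matrix.trace_conjTranspose, Matrix.trace_mul_comm]
  have h6 : (r * (Wᴴ * r)).trace = star (W * ρ).trace := by
    rw [Matrix.trace_mul_comm, mul_assoc, hr]
    have : Wᴴ * ρ = (ρ * W)ᴴ := by rw [conjTranspose_mul, hρH]
    rw [this, Matrix.trace_conjTranspose, Matrix.trace_mul_comm]
  have h7 : (r * r).trace = 1 := by rw [hr, htrρ]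
  simp only [conjTranspose_sub, conjTranspose_add, conjTranspose_mul, conjTranspose_smul,
    hrH, Matrix.sub_mul, Matrix.mul_sub, Matrix.add_mul, Matrix.mul_add,
    Matrix.smul_mul, Matrix.mul_smul, Matrix.trace_sub, Matrix.trace_add, Matrix.trace_smul,
    mul_assoc, smul_smul]
  rw [h1, h2, h3, h4, h5, h6, h7]
  simp only [smul_eq_mul, star_mul', star_ofNat]
  ring

lemma keyI2 (hr : r * r = ρ) :
    ((U*Vᴴ - Vᴴ*U)*ρ).trace
      = ((r*U - U*r) * (r*Vᴴ + Vᴴ*r - (2*(Vᴴ*ρ).trace)•r)).trace := by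
  have g1 : (r * (U * (r * Vᴴ))).trace = (U * (r * (Vᴴ * r))).trace := by
    rw [Matrix.trace_mul_comm r (U * (r * Vᴴ)), mul_assoc, mul_assoc]
  have g2 : (U * (r * (r * Vᴴ))).trace = (Vᴴ * (U * ρ)).trace := by
    rw [← mul_assoc r r Vᴴ, hr, ← mul_assoc U ρ Vᴴ, Matrix.trace_mul_comm (U * ρ) Vᴴ]
  have g3 : (r * (U * (Vᴴ * r))).trace = (U * (Vᴴ * ρ)).trace := by
    rw [Matrix.trace_mul_comm r (U * (Vᴴ * r)), mul_assoc, mul_assoc, hr]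
  have g4 : (r * (U * r)).trace = (U * (r * r)).trace := by
    rw [Matrix.trace_mul_comm r (U * r), mul_assoc]
  simp only [Matrix.sub_mul, Matrix.mul_sub, Matrix.add_mul, Matrix.mul_add,
    Matrix.smul_mul, Matrix.mul_smul, Matrix.trace_sub, Matrix.trace_add, Matrix.trace_smul,
    mul_assoc]
  rw [g1, g2, g3, g4]
  simp

lemma keyI3 (hr : r * r = ρ) (hrH : rᴴ = r) :
    ((U*Vᴴ - Vᴴ*U)*ρ).trace
      = ((r*V - V*r)ᴴ * (r*U + U*r - (2*(U*ρ).trace)•r)).trace := by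
  have k1 : (Vᴴ * (r * (r * U))).trace = (U * (Vᴴ * ρ)).trace := by
    rw [← mul_assoc r r U, hr, Matrix.trace_mul_comm Vᴴ (ρ * U), mul_assoc,
      Matrix.trace_mul_comm ρ (U * Vᴴ), mul_assoc]
  have k2 : (r * (Vᴴ * (r * U))).trace = (Vᴴ * (r * (U * r))).trace := by
    rw [Matrix.trace_mul_comm r (Vᴴ * (r * U)), mul_assoc, mul_assoc]
  have k3 : (r * (Vᴴ * (U * r))).trace = (Vᴴ * (U * ρ)).trace := by
    rw [Matrix.trace_mul_comm r (Vᴴ * (U * r)), mul_assoc, mul_assoc, hr]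
  have k4 : (r * (Vᴴ * r)).trace = (Vᴴ * (r * r)).trace := by
    rw [Matrix.trace_mul_comm r (Vᴴ * r), mul_assoc]
  simp only [conjTranspose_sub, conjTranspose_mul, hrH, Matrix.sub_mul, Matrix.mul_sub,
    Matrix.add_mul, Matrix.mul_add,
    Matrix.smul_mul, Matrix.mul_smul, Matrix.trace_sub, Matrix.trace_add, Matrix.trace_smul,
    mul_assoc]
  rw [k1, k2, k3, k4]
  simp

end helpers

/-- Variance of an operator `K` with respect to a state `ρ`:
`V_ρ(K) = ½ tr((K†K + KK†)ρ) − |tr(Kρ)|²`. -/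
def opVar {d : ℕ} (ρ K : Matrix (Fin d) (Fin d) ℂ) : ℝ :=
  (((Kᴴ * K + K * Kᴴ) * ρ).trace).re / 2 - ‖(K * ρ).trace‖ ^ 2

/-- Variance of a channel with Kraus operators `K i`: `V_ρ(Φ) = Σ_i V_ρ(K_i)`. -/
def chanVar {d n : ℕ} (ρ : Matrix (Fin d) (Fin d) ℂ)
    (K : Fin n → Matrix (Fin d) (Fin d) ℂ) : ℝ :=
  ∑ i, opVar ρ (K i)

/-- Wigner–Yanase skew information of a channel with Kraus operators `K i`:
`I_ρ(Φ) = ½ Σ_i ‖[√ρ, K_i]‖_F²`, where `√ρ` is the PSD square root of `ρ`. -/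
def chanSkew {d n : ℕ} (ρ : Matrix (Fin d) (Fin d) ℂ) (hρ : ρ.PosSemidef)
    (K : Fin n → Matrix (Fin d) (Fin d) ℂ) : ℝ :=
  (1 / 2) * ∑ i,
    (((hρ.sqrt * K i - K i * hρ.sqrt)ᴴ * (hρ.sqrt * K i - K i * hρ.sqrt)).trace).re

/-- Quantum uncertainty of a channel:
`Q_ρ(Φ) = √(V_ρ(Φ)² − (V_ρ(Φ) − I_ρ(Φ))²)`. -/
def chanQ {d n : ℕ} (ρ : Matrix (Fin d) (Fin d) ℂ) (hρ : ρ.PosSemidef)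
    (K : Fin n → Matrix (Fin d) (Fin d) ℂ) : ℝ :=
  Real.sqrt ((chanVar ρ K) ^ 2 - (chanVar ρ K - chanSkew ρ hρ K) ^ 2)

/-- Product-form uncertainty relation for two unitary channels (Corollary 1):
`Q_ρ(U) Q_ρ(V) ≥ ¼ |tr([U, V†] ρ)|²`. -/
theorem stmt_1 {d : ℕ}
    (ρ : Matrix (Fin d) (Fin d) ℂ) (hρ : ρ.PosSemidef) (htr : ρ.trace = 1)
    (U V : Matrix (Fin d) (Fin d) ℂ) (hU : Uᴴ * U = 1) (hV : Vᴴ * V = 1) :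
    chanQ ρ hρ ![U] * chanQ ρ hρ ![V] ≥
      (1 / 4) * ‖((U * Vᴴ - Vᴴ * U) * ρ).trace‖ ^ 2 := by
  have hUU : U * Uᴴ = 1 := mul_eq_one_comm.mp hU
  have hVV : V * Vᴴ = 1 := mul_eq_one_comm.mp hV
  set r := hρ.sqrt with hrdef
  have hr : r * r = ρ := psd_sqrt_mul_self hρ
  have hrH : rᴴ = r := psd_sqrt_herm hρ
  have hρH : ρᴴ = ρ := hρ.isHermitian
  set X : Matrix (Fin d) (Fin d) ℂ := r*U - U*r with hX
  set SU : Matrix (Fin d) (Fin d) ℂ := r*U + U*r - (2*(U*ρ).trace)•r with hSU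
  set Y : Matrix (Fin d) (Fin d) ℂ := r*V - V*r with hY
  set TV : Matrix (Fin d) (Fin d) ℂ := r*Vᴴ + Vᴴ*r - (2*(Vᴴ*ρ).trace)•r with hTV
  set a := ((Xᴴ*X).trace).re with ha
  set b := ((SUᴴ*SU).trace).re with hb
  set c := ((Yᴴ*Y).trace).re with hc
  set e := ((TVᴴ*TV).trace).re with he
  set sU := ‖(U*ρ).trace‖ ^ 2 with hsU
  set sV := ‖(V*ρ).trace‖ ^ 2 with hsV
  have hcast : ∀ x : ℝ, ((4:ℂ) - 4*(x:ℂ)).re = 4 - 4*x := fun x => by simp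
  have hmcU : (U*ρ).trace * star ((U*ρ).trace) = ((‖(U*ρ).trace‖)^2 : ℝ) := by
    rw [Complex.star_def, Complex.mul_conj, Complex.sq_norm]
  have hab : a + b = 4 - 4*sU := by
    have hL := keyL1 r ρ U hr hrH hρH htr hU
    rw [hmcU] at hL
    rw [ha, hb, ← Complex.add_re, hL, hsU]
    exact hcast _
  have hτV : (Vᴴ*ρ).trace = star ((V*ρ).trace) := by
    have h1 : Vᴴ*ρ = (ρ*V)ᴴ := by rw [conjTranspose_mul, hρH]
    rw [h1, Matrix.trace_conjTranspose, Matrix.trace_mul_comm]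
  have hmcV : (Vᴴ*ρ).trace * star ((Vᴴ*ρ).trace) = ((‖(V*ρ).trace‖)^2 : ℝ) := by
    rw [hτV, star_star, Complex.star_def, mul_comm, Complex.mul_conj, Complex.sq_norm]
  have hVHyp : (Vᴴ)ᴴ * Vᴴ = 1 := by rw [conjTranspose_conjTranspose]; exact hVV
  have hYeq : ((r*Vᴴ - Vᴴ*r)ᴴ * (r*Vᴴ - Vᴴ*r)).trace = (Yᴴ*Y).trace := by
    have h2 : r*Vᴴ - Vᴴ*r = -(Yᴴ) := by
      rw [hY, conjTranspose_sub, conjTranspose_mul, conjTranspose_mul, hrH, neg_sub]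
    rw [h2, conjTranspose_neg, conjTranspose_conjTranspose, neg_mul, mul_neg, neg_neg,
      Matrix.trace_mul_comm]
  have hce : c + e = 4 - 4*sV := by
    have hL := keyL1 r ρ Vᴴ hr hrH hρH htr hVHyp
    rw [hmcV, hYeq] at hL
    rw [hc, he, ← Complex.add_re, hL, hsV]
    exact hcast _
  have ha0 : 0 ≤ a := trace_sq_nonneg X
  have hb0 : 0 ≤ b := trace_sq_nonneg SU
  have hc0 : 0 ≤ c := trace_sq_nonneg Y
  have he0 : 0 ≤ e := trace_sq_nonneg TV
  have hVarU : chanVar ρ ![U] = 1 - sU := by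
    rw [chanVar, Fin.sum_univ_one]
    show opVar ρ U = 1 - sU
    rw [opVar, hU, hUU, hsU]
    rw [show ((1 : Matrix (Fin d) (Fin d) ℂ) + 1) * ρ = ρ + ρ by rw [Matrix.add_mul, one_mul]]
    rw [Matrix.trace_add, htr]
    norm_num
  have hVarV : chanVar ρ ![V] = 1 - sV := by
    rw [chanVar, Fin.sum_univ_one]
    show opVar ρ V = 1 - sV
    rw [opVar, hV, hVV, hsV]
    rw [show ((1 : Matrix (Fin d) (Fin d) ℂ) + 1) * ρ = ρ + ρ by rw [Matrix.add_mul, one_mul]]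
    rw [Matrix.trace_add, htr]
    norm_num
  have hSkewU : chanSkew ρ hρ ![U] = a / 2 := by
    rw [chanSkew, Fin.sum_univ_one]
    show (1/2 : ℝ) * ((((r * U - U * r)ᴴ * (r * U - U * r)).trace).re) = a / 2
    rw [← hX, ← ha]; ring
  have hSkewV : chanSkew ρ hρ ![V] = c / 2 := by
    rw [chanSkew, Fin.sum_univ_one]
    show (1/2 : ℝ) * ((((r * V - V * r)ᴴ * (r * V - V * r)).trace).re) = c / 2
    rw [← hY, ← hc]; ring
  have hQU : chanQ ρ hρ ![U] = Real.sqrt (a*b/4) := by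
    rw [chanQ, hVarU, hSkewU]
    congr 1
    have hb' : b = 4 - 4*sU - a := by linarith
    rw [hb']; ring
  have hQV : chanQ ρ hρ ![V] = Real.sqrt (c*e/4) := by
    rw [chanQ, hVarV, hSkewV]
    congr 1
    have he' : e = 4 - 4*sV - c := by linarith
    rw [he']; ring
  set T := ‖((U * Vᴴ - Vᴴ * U) * ρ).trace‖ with hT
  have hbound1 : T^2 ≤ a * e := by
    have h1 := keyI2 r ρ U V hr
    have h2 := trace_cs Xᴴ TV
    rw [conjTranspose_conjTranspose] at h2
    calc T^2 = ‖(X * TV).trace‖ ^2 := by rw [hT, h1, hX, hTV]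
      _ ≤ ((X*Xᴴ).trace).re * ((TVᴴ*TV).trace).re := h2
      _ = a * e := by rw [Matrix.trace_mul_comm X Xᴴ, ← ha, ← he]
  have hbound2 : T^2 ≤ c * b := by
    have h1 := keyI3 r ρ U V hr hrH
    have h2 := trace_cs Y SU
    calc T^2 = ‖(Yᴴ * SU).trace‖ ^2 := by rw [hT, h1, hY, hSU]
      _ ≤ ((Yᴴ*Y).trace).re * ((SUᴴ*SU).trace).re := h2
      _ = c * b := by rw [← hc, ← hb]
  rw [ge_iff_le, hQU, hQV]
  have hT0 : 0 ≤ T := norm_nonneg _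
  calc (1/4) * T^2 = Real.sqrt ((T^2/4)^2) := by
        rw [Real.sqrt_sq (div_nonneg (sq_nonneg T) (by norm_num))]; ring
    _ ≤ Real.sqrt ((a*b/4) * (c*e/4)) := by
        apply Real.sqrt_le_sqrt
        nlinarith [mul_le_mul hbound1 hbound2 (sq_nonneg T) (mul_nonneg ha0 he0),
          sq_nonneg T]
    _ = Real.sqrt (a*b/4) * Real.sqrt (c*e/4) := Real.sqrt_mul (div_nonneg (mul_nonneg ha0 hb0) (by norm_num)) _
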